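/- Let θ ∈ ℝ^N satisfy θ_1 ≥ θ_2 ≥ ⋯ ≥ θ_N ≥ 0 and θ_1 > 0. Then the GrOWL function G_θ : ℝ^{N×d} → ℝ, defined by G_θ(W) = Σ_{i=1}^N θ_i ‖w_{[i]}‖_2, where w_{[i]} is the row of W with the i-th largest Euclidean norm, is a norm on the space of N×d real matrices: it is nonnegative, vanishes exactly at W = 0, is absolutely homogeneous (G_θ(cW) = |c| G_θ(W) for all c ∈ ℝ), and satisfies the triangle inequality G_θ(W + V) ≤ G_θ(W) + G_θ(V). In particular, G_θ is convex. -/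
import Mathlib


/-- The Group Ordered Weighted ℓ1 (GrOWL) regularizer:
`growl θ W = ∑ i, θ i * ‖w_[i]‖₂`, where `w_[i]` is the row of `W` with the
`i`-th largest Euclidean norm (obtained by sorting the row norms in
nondecreasing order via `Tuple.sort` and reversing the index). -/
noncomputable def growl {N d : ℕ} (θ : Fin N → ℝ)
    (W : Fin N → EuclideanSpace ℝ (Fin d)) : ℝ :=
  ∑ i : Fin N, θ i * ‖W (Tuple.sort (fun j => ‖W j‖) (Fin.rev i))‖

lemma growl_eq_perm_sum {N d : ℕ} (θ : Fin N → ℝ)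
    (W : Fin N → EuclideanSpace ℝ (Fin d)) :
    growl θ W =
      ∑ i : Fin N, θ i *
        ‖W ((Fin.revPerm.trans (Tuple.sort (fun j => ‖W j‖))) i)‖ := rfl

/-- Rearrangement: any permuted pairing is at most the sorted pairing. -/
lemma sum_perm_le_growl {N d : ℕ} (θ : Fin N → ℝ) (hθ : Antitone θ)
    (W : Fin N → EuclideanSpace ℝ (Fin d)) (σ : Equiv.Perm (Fin N)) :
    ∑ i : Fin N, θ i * ‖W (σ i)‖ ≤ growl θ W := by
  set s := Tuple.sort (fun j => ‖W j‖) with hs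
  set f : Fin N → ℝ := fun i => ‖W (s (Fin.rev i))‖ with hf
  have hg : Monotone (fun i => ‖W (s i)‖) := Tuple.monotone_sort (fun j => ‖W j‖)
  have hfa : Antitone f := fun i j hij => hg (Fin.rev_le_rev.mpr hij)
  have hmono : Monovary θ f := by
    intro i j hij
    have hji : j < i := by
      by_contra h
      exact absurd (hfa (le_of_not_gt h)) (not_le.mpr hij)
    exact hθ hji.le
  have hτ : ∀ i, ‖W (σ i)‖ = f ((σ.trans (s.symm.trans Fin.revPerm)) i) := by
    intro i
    simp only [hf, Equiv.trans_apply, Fin.revPerm_apply, Fin.rev_rev, Equiv.apply_symm_apply]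
  calc ∑ i : Fin N, θ i * ‖W (σ i)‖
      = ∑ i : Fin N, θ i * f ((σ.trans (s.symm.trans Fin.revPerm)) i) :=
        Finset.sum_congr rfl fun i _ => by rw [hτ]
    _ ≤ ∑ i : Fin N, θ i * f i := hmono.sum_mul_comp_perm_le_sum_mul
    _ = growl θ W := rfl

lemma growl_nonneg {N d : ℕ} (θ : Fin N → ℝ) (hθ0 : ∀ i, 0 ≤ θ i)
    (W : Fin N → EuclideanSpace ℝ (Fin d)) : 0 ≤ growl θ W :=
  Finset.sum_nonneg fun i _ => mul_nonneg (hθ0 i) (norm_nonneg _)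

lemma growl_smul {N d : ℕ} (θ : Fin N → ℝ) (hθ : Antitone θ)
    (c : ℝ) (W : Fin N → EuclideanSpace ℝ (Fin d)) :
    growl θ (c • W) = |c| * growl θ W := by
  have key : ∀ (V : Fin N → EuclideanSpace ℝ (Fin d)) (σ : Equiv.Perm (Fin N)),
      ∑ i : Fin N, θ i * ‖(c • V) (σ i)‖ = |c| * ∑ i : Fin N, θ i * ‖V (σ i)‖ := by
    intro V σ
    rw [Finset.mul_sum]
    refine Finset.sum_congr rfl fun i _ => ?_
    simp only [Pi.smul_apply, norm_smul, Real.norm_eq_abs]; ring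
  apply le_antisymm
  · rw [growl_eq_perm_sum θ (c • W), key]
    exact mul_le_mul_of_nonneg_left (sum_perm_le_growl θ hθ W _) (abs_nonneg c)
  · rw [growl_eq_perm_sum θ W, ← key]
    exact sum_perm_le_growl θ hθ (c • W) _

lemma growl_add_le {N d : ℕ} (θ : Fin N → ℝ) (hθ : Antitone θ) (hθ0 : ∀ i, 0 ≤ θ i)
    (W V : Fin N → EuclideanSpace ℝ (Fin d)) :
    growl θ (W + V) ≤ growl θ W + growl θ V := by
  set σ := Fin.revPerm.trans (Tuple.sort (fun j => ‖(W + V) j‖)) with hσ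
  calc growl θ (W + V) = ∑ i : Fin N, θ i * ‖(W + V) (σ i)‖ := rfl
    _ ≤ ∑ i : Fin N, (θ i * ‖W (σ i)‖ + θ i * ‖V (σ i)‖) := by
        refine Finset.sum_le_sum fun i _ => ?_
        rw [← mul_add]
        exact mul_le_mul_of_nonneg_left (norm_add_le _ _) (hθ0 i)
    _ = (∑ i : Fin N, θ i * ‖W (σ i)‖) + ∑ i : Fin N, θ i * ‖V (σ i)‖ :=
        Finset.sum_add_distrib
    _ ≤ growl θ W + growl θ V :=
        add_le_add (sum_perm_le_growl θ hθ W σ) (sum_perm_le_growl θ hθ V σ)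

/-- For a nonincreasing nonnegative weight vector `θ` with
`θ_1 > 0`, the GrOWL function `G_θ` is a norm on the space of `N × d` real
matrices (rows in `ℝ^d` with the Euclidean norm): it is nonnegative, vanishes
exactly at `0`, is absolutely homogeneous, and satisfies the triangle
inequality; in particular it is convex. -/
theorem growl_is_norm {N d : ℕ} (hN : 0 < N) (θ : Fin N → ℝ)
    (hθ : Antitone θ) (hθ0 : ∀ i, 0 ≤ θ i) (hθ1 : 0 < θ ⟨0, hN⟩) :
    (∀ W : Fin N → EuclideanSpace ℝ (Fin d), 0 ≤ growl θ W) ∧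
    (∀ W : Fin N → EuclideanSpace ℝ (Fin d), growl θ W = 0 ↔ W = 0) ∧
    (∀ (c : ℝ) (W : Fin N → EuclideanSpace ℝ (Fin d)),
      growl θ (c • W) = |c| * growl θ W) ∧
    (∀ W V : Fin N → EuclideanSpace ℝ (Fin d),
      growl θ (W + V) ≤ growl θ W + growl θ V) ∧
    ConvexOn ℝ Set.univ (growl θ (d := d)) := by
  refine ⟨growl_nonneg θ hθ0, ?_, growl_smul θ hθ, growl_add_le θ hθ hθ0, ?_⟩
  · intro W
    constructor
    · intro h
      set s := Tuple.sort (fun j => ‖W j‖) with hs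
      have hg : Monotone (fun i => ‖W (s i)‖) := Tuple.monotone_sort (fun j => ‖W j‖)
      have hall : ∀ i ∈ Finset.univ, θ i * ‖W (s (Fin.rev i))‖ = 0 :=
        (Finset.sum_eq_zero_iff_of_nonneg
          (fun i _ => mul_nonneg (hθ0 i) (norm_nonneg _))).mp h
      have h0 : ‖W (s (Fin.rev ⟨0, hN⟩))‖ = 0 := by
        have := hall ⟨0, hN⟩ (Finset.mem_univ _)
        rcases mul_eq_zero.mp this with h' | h'
        · exact absurd h' hθ1.ne'
        · exact h'
      funext j
      have hle : s.symm j ≤ Fin.rev ⟨0, hN⟩ := by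
        rw [Fin.le_def, Fin.rev]
        simp only []
        omega
      have : ‖W (s (s.symm j))‖ ≤ ‖W (s (Fin.rev ⟨0, hN⟩))‖ := hg hle
      rw [Equiv.apply_symm_apply, h0] at this
      simpa using le_antisymm this (norm_nonneg _)
    · intro h
      subst h
      simp [growl]
  · refine ⟨convex_univ, fun x _ y _ a b ha hb hab => ?_⟩
    calc growl θ (a • x + b • y)
        ≤ growl θ (a • x) + growl θ (b • y) := growl_add_le θ hθ hθ0 _ _
      _ = a * growl θ x + b * growl θ y := by
          rw [growl_smul θ hθ, growl_smul θ hθ, abs_of_nonneg ha, abs_of_nonneg hb]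
      _ = a • growl θ x + b • growl θ y := rfl
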